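/- Let T be a commutative monad on a cartesian category with monoidal Alg(T) as above, a : TX → X an algebra with T̄-coalgebra b : X → TX, and x : I → X a map of algebras that lies in the basis, i.e., b ∘ x = T(x ∘ η₁) where x = a ∘ T(x ∘ η₁). Then x is copyable for the induced comultiplication: d_b ∘ x = (x ⊗ x) ∘ ρ, where ρ : I ≅ I ⊗ I and d_b = (a ⊗ a) ∘ ξ⁻¹ ∘ T(Δ) ∘ b. -/

import Mathlib

open CategoryTheory CategoryTheory.Limits CategoryTheory.MonoidalCategory

/-- Let `T` be a (commutative) monad on a cartesian category with monoidal
Eilenberg–Moore category as in the comonoid construction, `C` a `T̄`-coalgebra (basis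
`b = C.a` on the algebra `C.A`), and `x : I → C.A` a map of algebras that lies in the
basis, i.e. `b ∘ x = T(x')` where `x' = x ∘ η₁ : 1 → X` and `x = a ∘ T(x')`. Then `x`
is copyable for the induced comultiplication
`d_b = (a ⊗ a) ∘ ξ⁻¹ ∘ T(Δ) ∘ b`: one has `d_b ∘ x = (x ⊗ x) ∘ ρ` with
`ρ : I ≅ I ⊗ I`. -/
theorem bases_as_coalgebras_stmt19 {A : Type u} [Category.{v} A]
    [HasFiniteProducts A] (T : Monad A)
    [MonoidalCategory T.Algebra] [SymmetricCategory T.Algebra]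
    -- the free functor is strong (symmetric) monoidal:
    (ξ : ∀ P Q : A, T.free.obj P ⊗ T.free.obj Q ≅ T.free.obj (P ⨯ Q))
    (ι : 𝟙_ T.Algebra ≅ T.free.obj (⊤_ A))
    (hnat : ∀ {P P' Q Q' : A} (f : P ⟶ P') (g : Q ⟶ Q'),
      (T.free.map f ⊗ₘ T.free.map g) ≫ (ξ P' Q').hom =
        (ξ P Q).hom ≫ T.free.map (prod.map f g))
    (hleft : ∀ P : A,
      (ι.hom ⊗ₘ 𝟙 (T.free.obj P)) ≫ (ξ (⊤_ A) P).hom =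
        (λ_ (T.free.obj P)).hom ≫ T.free.map (prod.leftUnitor P).inv)
    (hright : ∀ P : A,
      (𝟙 (T.free.obj P) ⊗ₘ ι.hom) ≫ (ξ P (⊤_ A)).hom =
        (ρ_ (T.free.obj P)).hom ≫ T.free.map (prod.rightUnitor P).inv)
    -- a basis: a coalgebra for the induced comonad `T̄ = FU` on `Alg(T)`
    (C : Comonad.Coalgebra T.adj.toComonad)
    -- an element `x : I → C.A` of the algebra, with underlying point
    -- `x' = x ∘ η₁ : 1 → X`
    (x : 𝟙_ T.Algebra ⟶ C.A)
    (x' : (⊤_ A) ⟶ C.A.A)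
    (hx' : x' = T.η.app (⊤_ A) ≫ (ι.inv ≫ x).f)
    -- `x` is the transpose of `x'` : `x = a ∘ T(x')`
    (hx : x = ι.hom ≫ T.free.map x' ≫ T.adj.counit.app C.A)
    -- `x` lies in the basis : `b ∘ x = T(x')`
    (hbasis : x ≫ C.a = ι.hom ≫ T.free.map x') :
    x ≫ (C.a ≫ T.free.map (diag C.A.A) ≫ (ξ C.A.A C.A.A).inv ≫
        (T.adj.counit.app C.A ⊗ₘ T.adj.counit.app C.A)) =
      (λ_ (𝟙_ T.Algebra)).inv ≫ (x ⊗ₘ x) := by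
  -- naturality of diag
  have hdiag : x' ≫ diag C.A.A = diag (⊤_ A) ≫ prod.map x' x' := by
    apply Limits.prod.hom_ext <;> simp [diag]
  -- diag on the terminal object is the inverse of the left unitor
  have hterm : diag (⊤_ A) = (prod.leftUnitor (⊤_ A)).inv := by
    apply Limits.prod.hom_ext <;> simp [diag] <;> exact Subsingleton.elim _ _
  have h1 : T.free.map (prod.map x' x') ≫ (ξ C.A.A C.A.A).inv =
      (ξ (⊤_ A) (⊤_ A)).inv ≫ (T.free.map x' ⊗ₘ T.free.map x') := by
    rw [Iso.comp_inv_eq, Category.assoc, hnat, Iso.inv_hom_id_assoc]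
  have h2 : T.free.map (prod.leftUnitor (⊤_ A)).inv ≫ (ξ (⊤_ A) (⊤_ A)).inv =
      (λ_ (T.free.obj (⊤_ A))).inv ≫ (ι.hom ⊗ₘ 𝟙 (T.free.obj (⊤_ A))) := by
    rw [Iso.comp_inv_eq, Category.assoc, hleft, Iso.inv_hom_id_assoc]
  calc x ≫ (C.a ≫ T.free.map (diag C.A.A) ≫ (ξ C.A.A C.A.A).inv ≫
        (T.adj.counit.app C.A ⊗ₘ T.adj.counit.app C.A))
      = (x ≫ C.a) ≫ T.free.map (diag C.A.A) ≫ (ξ C.A.A C.A.A).inv ≫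
        (T.adj.counit.app C.A ⊗ₘ T.adj.counit.app C.A) := by simp
    _ = ι.hom ≫ (T.free.map x' ≫ T.free.map (diag C.A.A)) ≫ (ξ C.A.A C.A.A).inv ≫
        (T.adj.counit.app C.A ⊗ₘ T.adj.counit.app C.A) := by rw [hbasis]; simp only [Category.assoc]; erw [Category.assoc]; rfl
    _ = ι.hom ≫ T.free.map (diag (⊤_ A)) ≫ (T.free.map (prod.map x' x') ≫
        (ξ C.A.A C.A.A).inv) ≫ (T.adj.counit.app C.A ⊗ₘ T.adj.counit.app C.A) := by
        rw [← T.free.map_comp, hdiag, T.free.map_comp]; simp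
    _ = ι.hom ≫ (T.free.map (prod.leftUnitor (⊤_ A)).inv ≫ (ξ (⊤_ A) (⊤_ A)).inv) ≫
        (T.free.map x' ⊗ₘ T.free.map x') ≫
        (T.adj.counit.app C.A ⊗ₘ T.adj.counit.app C.A) := by rw [h1, hterm]; simp
    _ = (ι.hom ≫ (λ_ (T.free.obj (⊤_ A))).inv) ≫ (ι.hom ⊗ₘ 𝟙 (T.free.obj (⊤_ A))) ≫
        (T.free.map x' ⊗ₘ T.free.map x') ≫
        (T.adj.counit.app C.A ⊗ₘ T.adj.counit.app C.A) := by rw [h2]; simp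
    _ = (λ_ (𝟙_ T.Algebra)).inv ≫ (𝟙 (𝟙_ T.Algebra) ⊗ₘ ι.hom) ≫
        (ι.hom ⊗ₘ 𝟙 (T.free.obj (⊤_ A))) ≫
        (T.free.map x' ⊗ₘ T.free.map x') ≫
        (T.adj.counit.app C.A ⊗ₘ T.adj.counit.app C.A) := by
        rw [id_tensorHom, leftUnitor_inv_naturality, Category.assoc]
    _ = (λ_ (𝟙_ T.Algebra)).inv ≫
        ((ι.hom ≫ T.free.map x' ≫ T.adj.counit.app C.A) ⊗ₘ
         (ι.hom ≫ T.free.map x' ≫ T.adj.counit.app C.A)) := by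
        erw [tensorHom_comp_tensorHom, tensorHom_comp_tensorHom, tensorHom_comp_tensorHom]; simp
    _ = (λ_ (𝟙_ T.Algebra)).inv ≫ (x ⊗ₘ x) := by rw [← hx]
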